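/- Let φ be an interaction index of order k on games over N satisfying the Linearity, Dummy, Symmetry, Efficiency and Interaction Distribution axioms. Then for every nonempty T ⊆ N, the values of φ on the unanimity game u_T are: φ_S(u_T) = 1 if S = T and |S| < k; φ_S(u_T) = 0 if S ≠ T and |S| < k; φ_S(u_T) = 1/C(|T|, k) if |S| = k and S ⊆ T; and φ_S(u_T) = 0 if |S| = k and S ⊄ T. -/
import Mathlib


/-- The interaction game `v_T` with value `c`: worth `c` exactly when all of `T` is present. -/
noncomputable def interGame {n : ℕ} (T : Finset (Fin n)) (c : ℝ) : Finset (Fin n) → ℝ :=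
  fun S => if T ⊆ S then c else 0

/-- Linearity axiom for an interaction index of order `k`. -/
def LinearityAx {n : ℕ} (k : ℕ) (φ : (Finset (Fin n) → ℝ) → Finset (Fin n) → ℝ) : Prop :=
  ∀ (v₁ v₂ : Finset (Fin n) → ℝ) (c : ℝ) (S : Finset (Fin n)), S.Nonempty → S.card ≤ k →
    φ (v₁ + v₂) S = φ v₁ S + φ v₂ S ∧ φ (fun W => c * v₁ W) S = c * φ v₁ S

/-- Dummy axiom for an interaction index of order `k`. -/
def DummyAx {n : ℕ} (k : ℕ) (φ : (Finset (Fin n) → ℝ) → Finset (Fin n) → ℝ) : Prop :=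
  ∀ (v : Finset (Fin n) → ℝ) (i : Fin n),
    (∀ S : Finset (Fin n), i ∈ S → v S = v (S \ {i}) + v {i}) →
    φ v {i} = v {i} ∧
      ∀ S : Finset (Fin n), i ∈ S → 2 ≤ S.card → S.card ≤ k → φ v S = 0

/-- Symmetry axiom for an interaction index of order `k`:
`φ_S(v) = φ_{πS}(πv)`, where `(πv)(W) = v(π⁻¹ W)`. -/
def SymmetryAx {n : ℕ} (k : ℕ) (φ : (Finset (Fin n) → ℝ) → Finset (Fin n) → ℝ) : Prop :=
  ∀ (v : Finset (Fin n) → ℝ) (π : Equiv.Perm (Fin n)) (S : Finset (Fin n)),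
    S.Nonempty → S.card ≤ k →
    φ v S = φ (fun W => v (W.image π.symm)) (S.image π)

/-- Efficiency axiom for an interaction index of order `k`. -/
def EfficiencyAx {n : ℕ} (k : ℕ) (φ : (Finset (Fin n) → ℝ) → Finset (Fin n) → ℝ) : Prop :=
  ∀ v : Finset (Fin n) → ℝ,
    ∑ S ∈ (Finset.univ : Finset (Finset (Fin n))).filter
        (fun S => S.Nonempty ∧ S.card ≤ k), φ v S = v Finset.univ - v ∅

/-- Interaction distribution axiom for an interaction index of order `k`. -/
def InterDistAx {n : ℕ} (k : ℕ) (φ : (Finset (Fin n) → ℝ) → Finset (Fin n) → ℝ) : Prop :=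
  ∀ (T : Finset (Fin n)), T.Nonempty → ∀ (c : ℝ),
    ∀ S : Finset (Fin n), S.Nonempty → S ⊂ T → S.card < k → φ (interGame T c) S = 0

/-- The unanimity game `u_T`: worth `1` exactly when all of `T` is present. -/
noncomputable def uGame {n : ℕ} (T : Finset (Fin n)) : Finset (Fin n) → ℝ :=
  fun S => if T ⊆ S then 1 else 0

section Aux

variable {n k : ℕ} {φ : (Finset (Fin n) → ℝ) → Finset (Fin n) → ℝ}

lemma uGame_singleton_eq_zero {T : Finset (Fin n)} (hT : T.Nonempty)
    {i : Fin n} (hi : i ∉ T) : uGame T {i} = 0 := by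
  have h : ¬ T ⊆ {i} := by
    intro h
    obtain ⟨t, ht⟩ := hT
    have := Finset.mem_singleton.mp (h ht)
    exact hi (this ▸ ht)
  simp [uGame, h]

lemma uGame_dummy {T : Finset (Fin n)} (hT : T.Nonempty) {i : Fin n} (hi : i ∉ T) :
    ∀ S : Finset (Fin n), i ∈ S → uGame T S = uGame T (S \ {i}) + uGame T {i} := by
  intro S _
  rw [uGame_singleton_eq_zero hT hi, add_zero]
  have h2 : T ⊆ S \ {i} ↔ T ⊆ S := by
    rw [Finset.subset_sdiff]
    exact ⟨fun h => h.1, fun h => ⟨h, Finset.disjoint_singleton_right.mpr hi⟩⟩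
  simp only [uGame, h2]

lemma phi_zero_not_subset (hdum : DummyAx k φ) {T : Finset (Fin n)} (hT : T.Nonempty)
    {S : Finset (Fin n)} (hS : S.Nonempty) (hSk : S.card ≤ k) (hST : ¬ S ⊆ T) :
    φ (uGame T) S = 0 := by
  obtain ⟨i, hiS, hiT⟩ := Finset.not_subset.mp hST
  have hd := hdum (uGame T) i (uGame_dummy hT hiT)
  rcases Nat.lt_or_ge S.card 2 with h2 | h2
  · have hc : S.card = 1 := le_antisymm (by omega) (Finset.one_le_card.mpr hS)
    obtain ⟨j, hj⟩ := Finset.card_eq_one.mp hc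
    subst hj
    have : i = j := Finset.mem_singleton.mp hiS
    subst this
    rw [hd.1, uGame_singleton_eq_zero hT hiT]
  · exact hd.2 S hiS h2 hSk

lemma phi_zero_ssubset (hid : InterDistAx k φ) {T : Finset (Fin n)} (hT : T.Nonempty)
    {S : Finset (Fin n)} (hS : S.Nonempty) (hST : S ⊂ T) (hSk : S.card < k) :
    φ (uGame T) S = 0 :=
  hid T hT 1 S hS hST hSk

lemma mem_image_swap {W : Finset (Fin n)} {a b x : Fin n} :
    x ∈ W.image (Equiv.swap a b) ↔ Equiv.swap a b x ∈ W := by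
  constructor
  · intro h
    obtain ⟨y, hy, rfl⟩ := Finset.mem_image.mp h
    rwa [Equiv.swap_apply_self]
  · intro h
    exact Finset.mem_image.mpr ⟨_, h, Equiv.swap_apply_self _ _ _⟩

lemma swap_mem_of_mem {T : Finset (Fin n)} {a b x : Fin n} (ha : a ∈ T) (hb : b ∈ T)
    (hx : x ∈ T) : Equiv.swap a b x ∈ T := by
  rcases eq_or_ne x a with rfl | hxa
  · rwa [Equiv.swap_apply_left]
  rcases eq_or_ne x b with rfl | hxb
  · rwa [Equiv.swap_apply_right]
  · rwa [Equiv.swap_apply_of_ne_of_ne hxa hxb]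

lemma uGame_image_swap {T : Finset (Fin n)} {a b : Fin n} (ha : a ∈ T) (hb : b ∈ T)
    (W : Finset (Fin n)) : uGame T (W.image (Equiv.swap a b)) = uGame T W := by
  have key : T ⊆ W.image (Equiv.swap a b) ↔ T ⊆ W := by
    constructor
    · intro h x hx
      have := h (swap_mem_of_mem ha hb hx)
      rw [mem_image_swap, Equiv.swap_apply_self] at this
      exact this
    · intro h x hx
      rw [mem_image_swap]
      exact h (swap_mem_of_mem ha hb hx)
  simp only [uGame, key]

lemma image_swap_eq {S : Finset (Fin n)} {a b : Fin n} (ha : a ∈ S) (hb : b ∉ S) :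
    S.image (Equiv.swap a b) = insert b (S.erase a) := by
  ext x
  rw [mem_image_swap, Finset.mem_insert, Finset.mem_erase]
  rcases eq_or_ne x a with rfl | hxa
  · rw [Equiv.swap_apply_left]
    have hxb : x ≠ b := fun h => hb (h ▸ ha)
    simp [hb, hxb]
  rcases eq_or_ne x b with rfl | hxb
  · rw [Equiv.swap_apply_right]
    simp [ha]
  · rw [Equiv.swap_apply_of_ne_of_ne hxa hxb]
    simp [hxa, hxb]

lemma sym_step (hsym : SymmetryAx k φ) {T S : Finset (Fin n)} {a b : Fin n}
    (hST : S ⊆ T) (hS : S.Nonempty) (hSk : S.card ≤ k) (ha : a ∈ S) (hbT : b ∈ T)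
    (hb : b ∉ S) : φ (uGame T) S = φ (uGame T) (insert b (S.erase a)) := by
  have h := hsym (uGame T) (Equiv.swap a b) S hS hSk
  have h1 : (fun W : Finset (Fin n) => uGame T (W.image (Equiv.swap a b).symm)) = uGame T := by
    funext W
    rw [Equiv.symm_swap]
    exact uGame_image_swap (hST ha) hbT W
  have h2 : S.image (Equiv.swap a b) = insert b (S.erase a) := image_swap_eq ha hb
  rw [h1, h2] at h
  exact h

lemma sym_all_aux (hsym : SymmetryAx k φ) (m : ℕ) : ∀ {T S S' : Finset (Fin n)},
    S ⊆ T → S' ⊆ T → S.card = S'.card → S.Nonempty → S.card ≤ k →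
    (S' \ S).card ≤ m → φ (uGame T) S = φ (uGame T) S' := by
  induction m with
  | zero =>
    intro T S S' hST hS'T hcard hS hSk hm
    have h0 : S' \ S = ∅ := Finset.card_eq_zero.mp (Nat.le_zero.mp hm)
    have hsub : S' ⊆ S := Finset.sdiff_eq_empty_iff_subset.mp h0
    rw [Finset.eq_of_subset_of_card_le hsub hcard.le]
  | succ m ih =>
    intro T S S' hST hS'T hcard hS hSk hm
    by_cases hzero : S' \ S = ∅
    · have hsub : S' ⊆ S := Finset.sdiff_eq_empty_iff_subset.mp hzero
      rw [Finset.eq_of_subset_of_card_le hsub hcard.le]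
    · obtain ⟨b, hb⟩ := Finset.nonempty_iff_ne_empty.mpr hzero
      obtain ⟨hbS', hbS⟩ := Finset.mem_sdiff.mp hb
      have hSdiff : (S \ S').Nonempty := by
        rw [Finset.sdiff_nonempty]
        intro hsub
        have heq : S = S' := Finset.eq_of_subset_of_card_le hsub hcard.ge
        rw [heq] at hbS
        exact hbS hbS'
      obtain ⟨a, ha⟩ := hSdiff
      obtain ⟨haS, haS'⟩ := Finset.mem_sdiff.mp ha
      have hcard1 : 1 ≤ S.card := Finset.one_le_card.mpr hS
      have hstep := sym_step hsym hST hS hSk haS (hS'T hbS') hbS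
      rw [hstep]
      have hcardS₁ : (insert b (S.erase a)).card = S.card := by
        rw [Finset.card_insert_of_notMem (fun h => hbS (Finset.mem_of_mem_erase h)),
          Finset.card_erase_of_mem haS]
        omega
      have hkey : S' \ insert b (S.erase a) = (S' \ S).erase b := by
        ext x
        simp only [Finset.mem_sdiff, Finset.mem_insert, Finset.mem_erase, not_or, not_and,
          ne_eq]
        constructor
        · rintro ⟨hx1, hx2, hx3⟩
          have hxa : x ≠ a := fun h => haS' (h ▸ hx1)
          exact ⟨hx2, hx1, fun hxS => (hx3 hxa hxS).elim⟩
        · rintro ⟨hxb, hx1, hx2⟩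
          exact ⟨hx1, hxb, fun _ hxS => hx2 hxS⟩
      apply ih (Finset.insert_subset (hS'T hbS') ((Finset.erase_subset a S).trans hST)) hS'T
        (by rw [hcardS₁]; exact hcard) ⟨b, Finset.mem_insert_self b _⟩
        (by rw [hcardS₁]; exact hSk)
      rw [hkey, Finset.card_erase_of_mem hb]
      omega

lemma sym_all (hsym : SymmetryAx k φ) {T S S' : Finset (Fin n)}
    (hST : S ⊆ T) (hS'T : S' ⊆ T) (hcard : S.card = S'.card) (hS : S.Nonempty)
    (hSk : S.card ≤ k) : φ (uGame T) S = φ (uGame T) S' :=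
  sym_all_aux hsym (S' \ S).card hST hS'T hcard hS hSk le_rfl

lemma eff_one (heff : EfficiencyAx k φ) {T : Finset (Fin n)} (hT : T.Nonempty) :
    ∑ S ∈ (Finset.univ : Finset (Finset (Fin n))).filter
        (fun S => S.Nonempty ∧ S.card ≤ k), φ (uGame T) S = 1 := by
  rw [heff (uGame T)]
  have h1 : uGame T Finset.univ = 1 := by simp [uGame]
  have h2 : uGame T ∅ = 0 := by
    simp only [uGame, Finset.subset_empty]
    rw [if_neg hT.ne_empty]
  rw [h1, h2, sub_zero]

lemma phi_T_one (hdum : DummyAx k φ) (heff : EfficiencyAx k φ) (hid : InterDistAx k φ)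
    {T : Finset (Fin n)} (hT : T.Nonempty) (hTk : T.card ≤ k) :
    φ (uGame T) T = 1 := by
  have heq := eff_one heff hT (φ := φ)
  rw [Finset.sum_eq_single_of_mem T (by simp [hT, hTk])] at heq
  · exact heq
  · intro S hSf hSne
    obtain ⟨-, hSn, hSk⟩ := Finset.mem_filter.mp hSf
    by_cases hST : S ⊆ T
    · have hss : S ⊂ T := Finset.ssubset_iff_subset_ne.mpr ⟨hST, hSne⟩
      exact phi_zero_ssubset hid hT hSn hss (lt_of_lt_of_le (Finset.card_lt_card hss) hTk)
    · exact phi_zero_not_subset hdum hT hSn hSk hST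

lemma phi_k_subset (hdum : DummyAx k φ) (hsym : SymmetryAx k φ) (heff : EfficiencyAx k φ)
    (hid : InterDistAx k φ) (hk1 : 1 ≤ k) {T S : Finset (Fin n)} (hT : T.Nonempty)
    (hST : S ⊆ T) (hSk : S.card = k) :
    φ (uGame T) S = 1 / (T.card.choose k : ℝ) := by
  have hkT : k ≤ T.card := hSk ▸ Finset.card_le_card hST
  have hS : S.Nonempty := Finset.card_pos.mp (by omega)
  rcases eq_or_lt_of_le hkT with hkeq | hlt
  · have hSeqT : S = T := Finset.eq_of_subset_of_card_le hST (by omega)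
    subst hSeqT
    rw [phi_T_one hdum heff hid hT (le_of_eq hSk), ← hkeq, Nat.choose_self]
    norm_num
  · have heq := eff_one heff hT (φ := φ)
    have hsub : Finset.powersetCard k T ⊆ (Finset.univ : Finset (Finset (Fin n))).filter
        (fun S => S.Nonempty ∧ S.card ≤ k) := by
      intro X hX
      obtain ⟨hXT, hXc⟩ := Finset.mem_powersetCard.mp hX
      exact Finset.mem_filter.mpr ⟨Finset.mem_univ _,
        Finset.card_pos.mp (by omega), le_of_eq hXc⟩
    rw [← Finset.sum_subset hsub ?_] at heq
    · have hall : ∀ X ∈ Finset.powersetCard k T, φ (uGame T) X = φ (uGame T) S := by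
        intro X hX
        obtain ⟨hXT, hXc⟩ := Finset.mem_powersetCard.mp hX
        exact sym_all hsym hXT hST (by omega) (Finset.card_pos.mp (by omega))
          (le_of_eq hXc)
      rw [Finset.sum_congr rfl hall, Finset.sum_const, Finset.card_powersetCard,
        nsmul_eq_mul] at heq
      have hne : (T.card.choose k : ℝ) ≠ 0 := by
        exact_mod_cast (Nat.choose_pos hkT).ne'
      field_simp
      linarith [heq]
    · intro X hXf hXnp
      obtain ⟨-, hXn, hXk⟩ := Finset.mem_filter.mp hXf
      by_cases hXT : X ⊆ T
      · have hXck : X.card < k := by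
          rcases lt_or_eq_of_le hXk with h | h
          · exact h
          · exact absurd (Finset.mem_powersetCard.mpr ⟨hXT, h⟩) hXnp
        have hss : X ⊂ T := Finset.ssubset_iff_subset_ne.mpr
          ⟨hXT, fun h => by rw [h] at hXck; omega⟩
        exact phi_zero_ssubset hid hT hXn hss hXck
      · exact phi_zero_not_subset hdum hT hXn hXk hXT

end Aux

/-- Any interaction index of order `k` satisfying the Linearity, Dummy,
Symmetry, Efficiency and Interaction Distribution axioms takes the stated values on the
unanimity game `u_T`. -/
theorem axioms_determine_unanimity_values {n k : ℕ} (hk1 : 1 ≤ k) (hkn : k ≤ n)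
    (φ : (Finset (Fin n) → ℝ) → Finset (Fin n) → ℝ)
    (hlin : LinearityAx k φ) (hdum : DummyAx k φ) (hsym : SymmetryAx k φ)
    (heff : EfficiencyAx k φ) (hid : InterDistAx k φ)
    (T : Finset (Fin n)) (hT : T.Nonempty) (S : Finset (Fin n)) (hS : S.Nonempty) :
    (S.card < k →
      (S = T → φ (uGame T) S = 1) ∧ (S ≠ T → φ (uGame T) S = 0)) ∧
    (S.card = k →
      (S ⊆ T → φ (uGame T) S = 1 / (T.card.choose k : ℝ)) ∧
      (¬ S ⊆ T → φ (uGame T) S = 0)) := by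
  constructor
  · intro hSk
    constructor
    · rintro rfl
      exact phi_T_one hdum heff hid hT hSk.le
    · intro hne
      by_cases hST : S ⊆ T
      · exact phi_zero_ssubset hid hT hS (Finset.ssubset_iff_subset_ne.mpr ⟨hST, hne⟩) hSk
      · exact phi_zero_not_subset hdum hT hS hSk.le hST
  · intro hSk
    constructor
    · intro hST
      exact phi_k_subset hdum hsym heff hid hk1 hT hST hSk
    · intro hST
      exact phi_zero_not_subset hdum hT hS hSk.le hST
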